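/- Let $\ell: \mathbb{R} \to \mathbb{R}$ be twice differentiable with $\ell'' > 0$, let $V$ be a real random variable, and let $X$ be a $d$-dimensional random vector such that all relevant quantities below are finite. Suppose there is $L > 0$ such that $\mathbb{E}[(\ell''(V)\langle X,z\rangle^2)^2]^{1/2} \leq \sqrt{L}\, \mathbb{E}[\ell''(V)\langle X,z\rangle^2]$ for all $z \in \mathbb{R}^d$, and let $\bar{\sigma}^2 := \mathbb{E}[(\ell'(V)^2/\ell''(V))^2]^{1/2}$. Then for every $z \in \mathbb{R}^d$: $\mathbb{E}[\ell'(V)^2\langle X,z\rangle^2] \leq \bar{\sigma}^2 \sqrt{L}\, \mathbb{E}[\ell''(V)\langle X,z\rangle^2]$. In particular, $\mathrm{Cov}[\ell'(V)X] \preceq \bar{\sigma}^2\sqrt{L}\; \mathbb{E}[\ell''(V)\, X \otimes X]$ in the positive semidefinite order. -/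

import Mathlib

open MeasureTheory ProbabilityTheory Matrix

/-- Comparison between the covariance of the gradient and the Hessian in the
portfolio optimization problem: if
`E[(ℓ''(V)⟨X,z⟩²)²]^{1/2} ≤ √L E[ℓ''(V)⟨X,z⟩²]` for all `z` and
`σ̄² = E[(ℓ'(V)²/ℓ''(V))²]^{1/2}`, then
`E[ℓ'(V)²⟨X,z⟩²] ≤ σ̄² √L E[ℓ''(V)⟨X,z⟩²]` for all `z`; in particular
`Cov[ℓ'(V)X] ⪯ σ̄² √L E[ℓ''(V) X ⊗ X]` in the positive semidefinite order. -/
theorem portfolio_covariance_hessian_comparison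
    {Ω : Type*} [MeasureSpace Ω] [IsProbabilityMeasure (ℙ : Measure Ω)]
    {d : ℕ} (ℓ dℓ ddℓ : ℝ → ℝ)
    (hderiv1 : ∀ t, HasDerivAt ℓ (dℓ t) t)
    (hderiv2 : ∀ t, HasDerivAt dℓ (ddℓ t) t)
    (hpos : ∀ t, 0 < ddℓ t)
    (V : Ω → ℝ) (hVmeas : Measurable V)
    (X : Ω → Fin d → ℝ) (hXmeas : Measurable X)
    (L : ℝ) (hL : 0 < L)
    (hint1 : ∀ z : Fin d → ℝ, Integrable (fun ω => ddℓ (V ω) * (X ω ⬝ᵥ z) ^ 2) ℙ)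
    (hint2 : ∀ z : Fin d → ℝ, Integrable (fun ω => (ddℓ (V ω) * (X ω ⬝ᵥ z) ^ 2) ^ 2) ℙ)
    (hint3 : ∀ z : Fin d → ℝ, Integrable (fun ω => dℓ (V ω) ^ 2 * (X ω ⬝ᵥ z) ^ 2) ℙ)
    (hint4 : ∀ z : Fin d → ℝ, Integrable (fun ω => dℓ (V ω) * (X ω ⬝ᵥ z)) ℙ)
    (hσint : Integrable (fun ω => (dℓ (V ω) ^ 2 / ddℓ (V ω)) ^ 2) ℙ)
    (hLnorm : ∀ z : Fin d → ℝ,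
      (∫ ω, (ddℓ (V ω) * (X ω ⬝ᵥ z) ^ 2) ^ 2 ∂ℙ) ^ ((1 : ℝ) / 2)
        ≤ Real.sqrt L * ∫ ω, ddℓ (V ω) * (X ω ⬝ᵥ z) ^ 2 ∂ℙ)
    (σbar2 : ℝ)
    (hσ : σbar2 = (∫ ω, (dℓ (V ω) ^ 2 / ddℓ (V ω)) ^ 2 ∂ℙ) ^ ((1 : ℝ) / 2)) :
    (∀ z : Fin d → ℝ,
      ∫ ω, dℓ (V ω) ^ 2 * (X ω ⬝ᵥ z) ^ 2 ∂ℙ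
        ≤ σbar2 * Real.sqrt L * ∫ ω, ddℓ (V ω) * (X ω ⬝ᵥ z) ^ 2 ∂ℙ) ∧
    (Matrix.PosSemidef
      ((σbar2 * Real.sqrt L) •
          (Matrix.of fun i j => ∫ ω, ddℓ (V ω) * (X ω i * X ω j) ∂ℙ)
        - Matrix.of fun i j =>
            ∫ ω, (dℓ (V ω) * X ω i - ∫ ω', dℓ (V ω') * X ω' i ∂ℙ)
                * (dℓ (V ω) * X ω j - ∫ ω', dℓ (V ω') * X ω' j ∂ℙ) ∂ℙ)) := by
  -- measurability facts
  have hdℓcont : Continuous dℓ := by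
    rw [continuous_iff_continuousAt]
    exact fun t => (hderiv2 t).differentiableAt.continuousAt
  have hddℓeq : ddℓ = deriv dℓ := funext fun t => ((hderiv2 t).deriv).symm
  have hddℓmeas : Measurable ddℓ := hddℓeq ▸ measurable_deriv dℓ
  have hdℓmeas : Measurable dℓ := hdℓcont.measurable
  have hdot : ∀ z : Fin d → ℝ, Measurable fun ω => X ω ⬝ᵥ z := by
    intro z
    have : Measurable fun ω => ∑ i, X ω i * z i :=
      Finset.measurable_sum _ fun i _ =>
        ((measurable_pi_apply i).comp hXmeas).mul_const (z i)
    simpa [dotProduct] using this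
  -- main inequality
  have hmain : ∀ z : Fin d → ℝ,
      ∫ ω, dℓ (V ω) ^ 2 * (X ω ⬝ᵥ z) ^ 2 ∂ℙ
        ≤ σbar2 * Real.sqrt L * ∫ ω, ddℓ (V ω) * (X ω ⬝ᵥ z) ^ 2 ∂ℙ := by
    intro z
    set g : Ω → ℝ := fun ω => dℓ (V ω) ^ 2 / ddℓ (V ω) with hg
    set h : Ω → ℝ := fun ω => ddℓ (V ω) * (X ω ⬝ᵥ z) ^ 2 with hh
    have hgnn : ∀ ω, 0 ≤ g ω := fun ω => div_nonneg (sq_nonneg _) (hpos _).le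
    have hhnn : ∀ ω, 0 ≤ h ω := fun ω => mul_nonneg (hpos _).le (sq_nonneg _)
    have hgm : AEStronglyMeasurable g ℙ :=
      (((hdℓmeas.comp hVmeas).pow_const 2).div (hddℓmeas.comp hVmeas)).aestronglyMeasurable
    have hhm : AEStronglyMeasurable h ℙ :=
      ((hddℓmeas.comp hVmeas).mul ((hdot z).pow_const 2)).aestronglyMeasurable
    have hconj : Real.HolderConjugate 2 2 := Real.HolderConjugate.two_two
    have hof2 : (ENNReal.ofReal (2:ℝ)) = 2 := by norm_num
    have hgL2 : MemLp g (ENNReal.ofReal (2:ℝ)) ℙ := by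
      rw [hof2]; exact (memLp_two_iff_integrable_sq hgm).2 hσint
    have hhL2 : MemLp h (ENNReal.ofReal (2:ℝ)) ℙ := by
      rw [hof2]; exact (memLp_two_iff_integrable_sq hhm).2 (hint2 z)
    have hCS := integral_mul_le_Lp_mul_Lq_of_nonneg hconj
      (Filter.Eventually.of_forall hgnn) (Filter.Eventually.of_forall hhnn) hgL2 hhL2
    have heq : (fun ω => dℓ (V ω) ^ 2 * (X ω ⬝ᵥ z) ^ 2) = fun ω => g ω * h ω := by
      funext ω
      have h0 : ddℓ (V ω) ≠ 0 := (hpos _).ne'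
      show _ = dℓ (V ω) ^ 2 / ddℓ (V ω) * (ddℓ (V ω) * (X ω ⬝ᵥ z) ^ 2)
      rw [div_mul_eq_mul_div, eq_div_iff h0]
      ring
    have hrpow2 : ∀ u : Ω → ℝ, (∫ ω, u ω ^ (2:ℝ) ∂ℙ) = ∫ ω, u ω ^ 2 ∂ℙ := by
      intro u; congr 1; funext ω; rw [Real.rpow_two]
    rw [heq]
    calc ∫ ω, g ω * h ω ∂ℙ
        ≤ (∫ ω, g ω ^ (2:ℝ) ∂ℙ) ^ ((1:ℝ)/2) * (∫ ω, h ω ^ (2:ℝ) ∂ℙ) ^ ((1:ℝ)/2) := hCS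
      _ = σbar2 * (∫ ω, h ω ^ 2 ∂ℙ) ^ ((1:ℝ)/2) := by
            rw [hrpow2, hrpow2, hσ]
      _ ≤ σbar2 * (Real.sqrt L * ∫ ω, h ω ∂ℙ) := by
            refine mul_le_mul_of_nonneg_left (hLnorm z) ?_
            rw [hσ]; positivity
      _ = σbar2 * Real.sqrt L * ∫ ω, h ω ∂ℙ := by ring
  refine ⟨hmain, ?_⟩
  -- integrability of matrix entries via polarization
  have hpol : ∀ (f : Ω → ℝ), (∀ z : Fin d → ℝ, Integrable (fun ω => f ω * (X ω ⬝ᵥ z) ^ 2) ℙ) →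
      ∀ i j, Integrable (fun ω => f ω * (X ω i * X ω j)) ℙ := by
    intro f hf i j
    have h1 := hf (Pi.single i 1 + Pi.single j 1)
    have h2 := hf (Pi.single i 1)
    have h3 := hf (Pi.single j 1)
    have e : (fun ω => f ω * (X ω i * X ω j)) = fun ω =>
        (f ω * (X ω ⬝ᵥ (Pi.single i 1 + Pi.single j 1)) ^ 2
          - f ω * (X ω ⬝ᵥ Pi.single i 1) ^ 2 - f ω * (X ω ⬝ᵥ Pi.single j 1) ^ 2) / 2 := by
      funext ω
      simp only [dotProduct_add, dotProduct_single, mul_one]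
      ring
    rw [e]
    exact ((h1.sub h2).sub h3).div_const 2
  have hm : ∀ i, Integrable (fun ω => dℓ (V ω) * X ω i) ℙ := by
    intro i
    have := hint4 (Pi.single i 1)
    simpa [dotProduct_single] using this
  set m : Fin d → ℝ := fun i => ∫ ω, dℓ (V ω) * X ω i ∂ℙ with hmdef
  have hddint : ∀ i j, Integrable (fun ω => ddℓ (V ω) * (X ω i * X ω j)) ℙ :=
    hpol _ hint1
  have hd2int : ∀ i j, Integrable (fun ω => dℓ (V ω) ^ 2 * (X ω i * X ω j)) ℙ :=
    hpol _ hint3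
  have hcovint : ∀ i j, Integrable
      (fun ω => (dℓ (V ω) * X ω i - m i) * (dℓ (V ω) * X ω j - m j)) ℙ := by
    intro i j
    have e : (fun ω => (dℓ (V ω) * X ω i - m i) * (dℓ (V ω) * X ω j - m j)) = fun ω =>
        dℓ (V ω) ^ 2 * (X ω i * X ω j) - m j * (dℓ (V ω) * X ω i)
          - m i * (dℓ (V ω) * X ω j) + m i * m j := by
      funext ω; ring
    rw [e]
    exact (((hd2int i j).sub ((hm i).const_mul (m j))).sub
      ((hm j).const_mul (m i))).add (integrable_const _)
  -- PSD part
  rw [Matrix.posSemidef_iff_dotProduct_mulVec]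
  constructor
  · -- Hermitian
    have hA : (Matrix.of fun i j => ∫ ω, ddℓ (V ω) * (X ω i * X ω j) ∂ℙ).IsHermitian := by
      ext i j
      simp only [conjTranspose_apply, of_apply, star_trivial]
      congr 1; funext ω; ring
    have hB : (Matrix.of fun i j =>
        ∫ ω, (dℓ (V ω) * X ω i - ∫ ω', dℓ (V ω') * X ω' i ∂ℙ)
            * (dℓ (V ω) * X ω j - ∫ ω', dℓ (V ω') * X ω' j ∂ℙ) ∂ℙ).IsHermitian := by
      ext i j
      simp only [conjTranspose_apply, of_apply, star_trivial]
      congr 1; funext ω; ring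
    show _ = _
    rw [conjTranspose_sub, conjTranspose_smul, hA, hB]
    simp
  · intro z
    simp only [star_trivial]
    rw [sub_mulVec, dotProduct_sub, Matrix.smul_mulVec, dotProduct_smul, smul_eq_mul,
      sub_nonneg]
    -- compute quadratic form of A
    have hquad : ∀ (F : Fin d → Fin d → Ω → ℝ),
        (∀ i j, Integrable (F i j) ℙ) →
        z ⬝ᵥ (Matrix.of fun i j => ∫ ω, F i j ω ∂ℙ).mulVec z
          = ∫ ω, ∑ i, ∑ j, z i * F i j ω * z j ∂ℙ := by
      intro F hF
      rw [integral_finset_sum _ (fun i _ => by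
        refine integrable_finset_sum _ (fun j _ => ?_)
        exact ((hF i j).const_mul (z i)).mul_const (z j))]
      simp only [dotProduct, mulVec, of_apply]
      refine Finset.sum_congr rfl fun i _ => ?_
      rw [integral_finset_sum _ (fun j _ => ((hF i j).const_mul (z i)).mul_const (z j))]
      rw [Finset.mul_sum]
      refine Finset.sum_congr rfl fun j _ => ?_
      rw [integral_mul_const, integral_const_mul]
      ring
    have hAq : z ⬝ᵥ (Matrix.of fun i j => ∫ ω, ddℓ (V ω) * (X ω i * X ω j) ∂ℙ).mulVec z
        = ∫ ω, ddℓ (V ω) * (X ω ⬝ᵥ z) ^ 2 ∂ℙ := by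
      rw [hquad _ hddint]
      congr 1; funext ω
      rw [dotProduct, sq, Finset.sum_mul_sum]
      rw [Finset.mul_sum, ← Finset.sum_comm]
      refine Finset.sum_congr rfl fun i _ => ?_
      rw [Finset.mul_sum]
      refine Finset.sum_congr rfl fun j _ => ?_
      ring
    have hBq : z ⬝ᵥ (Matrix.of fun i j =>
          ∫ ω, (dℓ (V ω) * X ω i - ∫ ω', dℓ (V ω') * X ω' i ∂ℙ)
              * (dℓ (V ω) * X ω j - ∫ ω', dℓ (V ω') * X ω' j ∂ℙ) ∂ℙ).mulVec z
        = ∫ ω, (dℓ (V ω) * (X ω ⬝ᵥ z) - ∑ i, m i * z i) ^ 2 ∂ℙ := by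
      rw [hquad _ hcovint]
      congr 1; funext ω
      have : dℓ (V ω) * (X ω ⬝ᵥ z) - ∑ i, m i * z i
          = ∑ i, (dℓ (V ω) * X ω i - m i) * z i := by
        rw [dotProduct, Finset.mul_sum, ← Finset.sum_sub_distrib]
        refine Finset.sum_congr rfl fun i _ => ?_
        ring
      rw [this, sq, Finset.sum_mul_sum]
      refine Finset.sum_congr rfl fun i _ => Finset.sum_congr rfl fun j _ => ?_
      ring
    rw [hAq, hBq]
    -- bound the variance by the second moment
    set c : ℝ := ∑ i, m i * z i with hc
    have hY : Integrable (fun ω => dℓ (V ω) * (X ω ⬝ᵥ z)) ℙ := hint4 z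
    have hY2 : Integrable (fun ω => (dℓ (V ω) * (X ω ⬝ᵥ z)) ^ 2) ℙ := by
      have := hint3 z
      simpa [mul_pow] using this
    have hEY : ∫ ω, dℓ (V ω) * (X ω ⬝ᵥ z) ∂ℙ = c := by
      rw [hc]
      have e : (fun ω => dℓ (V ω) * (X ω ⬝ᵥ z)) = fun ω => ∑ i, dℓ (V ω) * X ω i * z i := by
        funext ω
        rw [dotProduct, Finset.mul_sum]
        exact Finset.sum_congr rfl fun i _ => by ring
      rw [e, integral_finset_sum _ (fun i _ => (hm i).mul_const (z i))]
      exact Finset.sum_congr rfl fun i _ => by rw [integral_mul_const]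
    have hvar : ∫ ω, (dℓ (V ω) * (X ω ⬝ᵥ z) - c) ^ 2 ∂ℙ
        = ∫ ω, (dℓ (V ω) * (X ω ⬝ᵥ z)) ^ 2 ∂ℙ - c ^ 2 := by
      have e : (fun ω => (dℓ (V ω) * (X ω ⬝ᵥ z) - c) ^ 2) = fun ω =>
          (dℓ (V ω) * (X ω ⬝ᵥ z)) ^ 2 - 2 * c * (dℓ (V ω) * (X ω ⬝ᵥ z)) + c ^ 2 := by
        funext ω; ring
      have hsub : Integrable (fun ω =>
          (dℓ (V ω) * (X ω ⬝ᵥ z)) ^ 2 - 2 * c * (dℓ (V ω) * (X ω ⬝ᵥ z))) ℙ :=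
        hY2.sub (hY.const_mul _)
      rw [e, integral_add hsub (integrable_const _),
        integral_sub hY2 (hY.const_mul _), integral_const_mul, hEY, integral_const]
      simp [measure_univ]
      ring
    calc ∫ ω, (dℓ (V ω) * (X ω ⬝ᵥ z) - c) ^ 2 ∂ℙ
        ≤ ∫ ω, (dℓ (V ω) * (X ω ⬝ᵥ z)) ^ 2 ∂ℙ := by
          rw [hvar]; exact sub_le_self _ (sq_nonneg _)
      _ = ∫ ω, dℓ (V ω) ^ 2 * (X ω ⬝ᵥ z) ^ 2 ∂ℙ := by
          congr 1; funext ω; ring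
      _ ≤ σbar2 * Real.sqrt L * ∫ ω, ddℓ (V ω) * (X ω ⬝ᵥ z) ^ 2 ∂ℙ := hmain z
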